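/- If x, y ∈ ℝ^n are comonotonic, i.e., (x_i − x_j)(y_i − y_j) ≥ 0 for all i, j, then the order statistics are additive: (x+y)_{i:n} = x_{i:n} + y_{i:n} for all i. -/

import Mathlib

lemma sort_eq_ofFn {n : ℕ} (f : Fin n → ℝ) (σ : Equiv.Perm (Fin n))
    (h : Monotone (f ∘ σ)) :
    (Finset.univ.val.map f).sort (· ≤ ·) = List.ofFn (f ∘ σ) := by
  refine (fun hp h1 h2 => List.Perm.eq_of_pairwise' (r := (· ≤ ·)) h1 h2 hp) ?_ ?_ ?_
  · rw [← Multiset.coe_eq_coe, Multiset.sort_eq]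
    have h1 : Multiset.map σ Finset.univ.val = Finset.univ.val := by
      have := congrArg Finset.val (Finset.map_univ_equiv σ)
      simpa [Finset.map_val] using this
    have h2 : (List.ofFn (f ∘ σ) : Multiset ℝ) = Multiset.map (f ∘ σ) Finset.univ.val := by
      simp [List.ofFn_eq_map, Fin.univ_def, Multiset.map_coe]
    rw [h2, ← Multiset.map_map, h1]
  · exact Multiset.pairwise_sort _ _
  · rw [← List.sortedLE_iff_pairwise, List.sortedLE_ofFn_iff]
    exact h

/-- The `i`-th order statistic (`i`-th smallest coordinate, `i = 1,…,n`) of `x ∈ ℝ^n`. -/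
noncomputable def orderStat {n : ℕ} (x : Fin n → ℝ) (i : ℕ) : ℝ :=
  ((Finset.univ.val.map x).sort (· ≤ ·)).getD (i - 1) 0

/-- If `x` and `y` are comonotonic, then the order statistics of the sum
are the sums of the order statistics. -/
theorem orderStat_add_of_comonotonic (n : ℕ) (x y : Fin n → ℝ)
    (hcom : ∀ i j, 0 ≤ (x i - x j) * (y i - y j)) :
    ∀ i ∈ Finset.Icc 1 n,
      orderStat (fun j => x j + y j) i = orderStat x i + orderStat y i := by
  intro i hi
  rw [Finset.mem_Icc] at hi
  set σ := Tuple.sort (fun j => x j + y j) with hσ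
  have hs : Monotone ((fun j => x j + y j) ∘ σ) := Tuple.monotone_sort _
  have hx : Monotone (x ∘ σ) := by
    intro a b hab
    have h1 := hs hab
    simp only [Function.comp] at h1 ⊢
    nlinarith [hcom (σ a) (σ b)]
  have hy : Monotone (y ∘ σ) := by
    intro a b hab
    have h1 := hs hab
    simp only [Function.comp] at h1 ⊢
    nlinarith [hcom (σ a) (σ b)]
  unfold orderStat
  rw [sort_eq_ofFn _ σ hs, sort_eq_ofFn _ σ hx, sort_eq_ofFn _ σ hy]
  have hlt : i - 1 < n := by omega
  simp [List.getD_eq_getElem, hlt]
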